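/- Let 1 ≤ k ≤ n-1 and let t be a nonnegative integer. Then C(n-1, k-1) times the sum over j from 0 to k-1 of ((n-k)/(n-k+j)) * C(t, j) * C(k-1, j) equals the sum over j from 0 to k-1 of C(n-k-1+j, j) * C(t+j, j). -/

import Mathlib

open Finset Nat

lemma termQ (s K j : ℕ) (hj : j ≤ K) :
    ((s+1+K).choose K : ℚ) * ((s+1 : ℚ)/(s+1+j)) * (K.choose j : ℚ)
      = ((s+j).choose j : ℚ) * ((s+1+K).choose (K-j) : ℚ) := by
  have e1 : ((s+1+K).choose K : ℚ) = (s+1+K)! / (K ! * (s+1)!) := by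
    rw [Nat.cast_choose ℚ (by omega), show s+1+K-K = s+1 from by omega]
  have e2 : ((s+1+K).choose (K-j) : ℚ) = (s+1+K)! / ((K-j)! * (s+1+j)!) := by
    rw [Nat.cast_choose ℚ (by omega), show s+1+K-(K-j) = s+1+j from by omega]
  have e3 : ((s+j).choose j : ℚ) = (s+j)! / (j ! * s !) := by
    rw [Nat.cast_choose ℚ (by omega), show s+j-j = s from by omega]
  have e4 : (K.choose j : ℚ) = K ! / (j ! * (K-j)!) := by
    rw [Nat.cast_choose ℚ (by omega)]
  have f1 : ((s+1)! : ℚ) = (s+1) * s ! := by exact_mod_cast congrArg Nat.cast (Nat.factorial_succ s)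
  have f2 : ((s+1+j)! : ℚ) = (s+1+j) * (s+j)! := by
    have : (s+1+j)! = (s+j+1) * (s+j)! := by
      rw [show s+1+j = s+j+1 from by omega, Nat.factorial_succ]
    rw [this]; push_cast; ring
  have p1 : ((s+1+K)! : ℚ) ≠ 0 := by positivity
  have p2 : (K ! : ℚ) ≠ 0 := by positivity
  have p3 : (s ! : ℚ) ≠ 0 := by positivity
  have p4 : (j ! : ℚ) ≠ 0 := by positivity
  have p5 : ((K-j)! : ℚ) ≠ 0 := by positivity
  have p6 : ((s+j)! : ℚ) ≠ 0 := by positivity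
  have p7 : (s+1+j : ℚ) ≠ 0 := by positivity
  rw [e1, e2, e3, e4, f1, f2]
  field_simp


-- trinomial: C(s+j,j) C(j,i) = C(s+i,i) C(s+j, j-i)  for i ≤ j
lemma trinom (s i j : ℕ) (hij : i ≤ j) :
    (s+j).choose j * j.choose (j-i) = (s+j).choose (j-i) * (s+i).choose i := by
  have := Nat.choose_mul (n := s+j) (show j-i ≤ j by omega)
  rw [this, show s+j-(j-i) = s+i from by omega, show j-(j-i) = i from by omega]

-- hockey stick: Σ_{l<M+1} C(r+l, l) = C(r+M+1, M)
lemma hockey (r M : ℕ) : ∑ l ∈ range (M+1), (r+l).choose l = (r+M+1).choose M := by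
  have h : ∀ l, (r+l).choose l = (r+l).choose r := fun l => Nat.choose_symm_add.symm ▸ rfl
  calc ∑ l ∈ range (M+1), (r+l).choose l
      = ∑ l ∈ range (M+1), (r+l).choose r := by
        refine sum_congr rfl fun l _ => ?_
        rw [show r+l = l+r from by omega, Nat.choose_symm_add,
          show l+r = r+l from by omega, Nat.choose_symm_add]
    _ = ∑ q ∈ Icc r (r+M), q.choose r := by
        rw [show Icc r (r+M) = Ico r (r+M+1) from by rw [Finset.Ico_add_one_right_eq_Icc],
          Finset.sum_Ico_eq_sum_range, show r+M+1-r = M+1 from by omega]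
    _ = (r+M+1).choose (r+1) := Nat.sum_Icc_choose _ _
    _ = (r+M+1).choose M := by
        rw [show r+1 = (r+M+1) - M from by omega, Nat.choose_symm (by omega)]

lemma sumB (s K t : ℕ) :
    ∑ j ∈ range (K+1), (s+j).choose j * (s+1+K).choose (K-j) * t.choose j
      = ∑ j ∈ range (K+1), (s+j).choose j * (t+j).choose j := by
  have rhs1 : ∀ j, (t+j).choose j = ∑ i ∈ range (j+1), t.choose i * j.choose (j-i) := by
    intro j
    rw [Nat.add_choose_eq, Finset.Nat.sum_antidiagonal_eq_sum_range_succ_mk]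
  have rhs2 : ∑ j ∈ range (K+1), (s+j).choose j * (t+j).choose j
      = ∑ j ∈ range (K+1), ∑ i ∈ range (j+1), (s+j).choose j * (t.choose i * j.choose (j-i)) :=
    sum_congr rfl fun j _ => by rw [rhs1 j, Finset.mul_sum]
  rw [rhs2]
  simp only [range_eq_Ico]
  rw [← Finset.sum_Ico_Ico_comm 0 (K+1)
    (fun i j => (s+j).choose j * (t.choose i * j.choose (j-i)))]
  refine sum_congr rfl fun i hi => ?_
  simp only [mem_Ico] at hi
  have hiK : i ≤ K := by omega
  symm
  calc ∑ j ∈ Ico i (K+1), (s+j).choose j * (t.choose i * j.choose (j-i))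
      = ∑ j ∈ Ico i (K+1), (s+i).choose i * (s+j).choose (j-i) * t.choose i := by
        refine sum_congr rfl fun j hj => ?_
        simp only [mem_Ico] at hj
        have := trinom s i j (by omega)
        rw [show (s+j).choose j * (t.choose i * j.choose (j-i))
            = ((s+j).choose j * j.choose (j-i)) * t.choose i from by ring, this]
        ring
    _ = (s+i).choose i * (∑ j ∈ Ico i (K+1), (s+j).choose (j-i)) * t.choose i := by
        rw [Finset.mul_sum, Finset.sum_mul]
    _ = (s+i).choose i * (s+1+K).choose (K-i) * t.choose i := by
        congr 2
        rw [Finset.sum_Ico_eq_sum_range]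
        have : ∀ l, (s+(i+l)).choose (i+l-i) = ((s+i)+l).choose l := by
          intro l; congr 1 <;> omega
        rw [show (K+1-i) = (K-i)+1 from by omega]
        calc ∑ l ∈ range ((K-i)+1), (s+(i+l)).choose (i+l-i)
            = ∑ l ∈ range ((K-i)+1), ((s+i)+l).choose l :=
              sum_congr rfl fun l _ => this l
          _ = ((s+i)+(K-i)+1).choose (K-i) := hockey (s+i) (K-i)
          _ = (s+1+K).choose (K-i) := by congr 1; omega


lemma genQ (s K t : ℕ) :
    ((s+1+K).choose K : ℚ) *
        ∑ j ∈ range (K+1), ((s+1 : ℚ))/((s:ℚ)+1+j) * (t.choose j : ℚ) * (K.choose j : ℚ)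
      = ∑ j ∈ range (K+1), (((s+j).choose j : ℕ) : ℚ) * (((t+j).choose j : ℕ) : ℚ) := by
  rw [Finset.mul_sum]
  rw [Finset.sum_congr rfl (fun j hj => by
    have hjK : j ≤ K := by simpa [Nat.lt_succ_iff] using hj
    show ((s+1+K).choose K : ℚ) * (((s+1:ℚ))/((s:ℚ)+1+j) * (t.choose j : ℚ) * (K.choose j : ℚ))
        = (((s+j).choose j * (s+1+K).choose (K-j) * t.choose j : ℕ) : ℚ)
    push_cast
    linear_combination (t.choose j : ℚ) * termQ s K j hjK)]
  rw [← Nat.cast_sum, sumB s K t, Nat.cast_sum]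
  push_cast
  rfl

theorem remaining_factor_identity (n k t : ℕ) (hk : 1 ≤ k) (hkn : k ≤ n - 1) :
    ((n - 1).choose (k - 1) : ℚ) *
        ∑ j ∈ Finset.range k,
          ((n - k : ℕ) : ℚ) / ((n - k + j : ℕ) : ℚ) *
            (t.choose j : ℚ) * ((k - 1).choose j : ℚ) =
      ∑ j ∈ Finset.range k,
        ((n - k - 1 + j).choose j : ℚ) * ((t + j).choose j : ℚ) := by
  obtain ⟨K, rfl⟩ : ∃ K, k = K + 1 := ⟨k-1, by omega⟩
  obtain ⟨s, hs⟩ : ∃ s, n - (K+1) = s + 1 := ⟨n - (K+1) - 1, by omega⟩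
  simp only [hs, show n - 1 = s+1+K from by omega, show K+1-1 = K from by omega,
    show s+1-1 = s from by omega]
  have := genQ s K t
  push_cast at this ⊢
  convert this using 2
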